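/- (Part of Theorem 4.1.) Let (D1, M) be a consistent periodic first-derivative SBP operator (M symmetric positive definite and diagonal, M·D1 + D1ᵀ·M = 0, D1·𝟙 = 0) and D2 a consistent periodic second-derivative SBP operator with the same diagonal mass matrix M (M·D2 = −A2, A2 symmetric positive semidefinite, D2·𝟙 = 0). Let η, u : ℝ → ℝ^m be differentiable and satisfy the split-form BBM-BBM semidiscretization ∂ₜη = −(I − D2)⁻¹·D1·(u + η∘u), ∂ₜu = −(I − D2)⁻¹·(D1·η + u∘(D1·u)) for all t. Then the discrete total mass of η, namely 𝟙ᵀ·M·η(t), is constant in t. -/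

import Mathlib

open Matrix

/-- For the split-form BBM-BBM semidiscretization
`∂ₜη = −(I − D2)⁻¹ D1 (u + η∘u)`, `∂ₜu = −(I − D2)⁻¹ (D1 η + u∘(D1 u))`
with consistent periodic SBP operators `D1`, `D2` sharing a diagonal
symmetric positive definite mass matrix `M`, the discrete total mass
`𝟙ᵀ·M·η(t)` is constant in time. -/
theorem bbm_bbm_split_form_conserves_total_mass_eta
    (m : ℕ) (D1 D2 M A2 : Matrix (Fin m) (Fin m) ℝ)
    (hM : M.PosDef) (hMdiag : M.IsDiag)
    (hD1 : M * D1 + D1ᵀ * M = 0)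
    (hD1cons : D1 *ᵥ (1 : Fin m → ℝ) = 0)
    (hA2 : A2.PosSemidef)
    (hD2 : M * D2 = -A2)
    (hD2cons : D2 *ᵥ (1 : Fin m → ℝ) = 0)
    (η u : ℝ → Fin m → ℝ)
    (hη : ∀ t, HasDerivAt η (-((1 - D2)⁻¹ *ᵥ (D1 *ᵥ (u t + η t * u t)))) t)
    (hu : ∀ t, HasDerivAt u (-((1 - D2)⁻¹ *ᵥ (D1 *ᵥ η t + u t * (D1 *ᵥ u t)))) t) :
    ∀ t₁ t₂ : ℝ,
      (1 : Fin m → ℝ) ⬝ᵥ (M *ᵥ η t₁) = (1 : Fin m → ℝ) ⬝ᵥ (M *ᵥ η t₂) := by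
  -- notation: μ = 𝟙ᵀ M
  set μ : Fin m → ℝ := (1 : Fin m → ℝ) ᵥ* M with hμ
  -- 𝟙ᵀ A2 = 0
  have hA2one : (1 : Fin m → ℝ) ᵥ* A2 = 0 := by
    have h1 : A2 *ᵥ (1 : Fin m → ℝ) = 0 := by
      have : (M * D2) *ᵥ (1 : Fin m → ℝ) = M *ᵥ (D2 *ᵥ (1 : Fin m → ℝ)) := by
        rw [mulVec_mulVec]
      rw [hD2] at this
      simpa [hD2cons, neg_mulVec] using this.symm
    have hsym : A2ᵀ = A2 := (by simpa using hA2.1 : A2.IsSymm)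
    calc (1 : Fin m → ℝ) ᵥ* A2 = (1 : Fin m → ℝ) ᵥ* A2ᵀ := by rw [hsym]
      _ = A2 *ᵥ 1 := (vecMul_transpose A2 1)
      _ = 0 := h1
  -- μ (I - D2) = μ
  have hμfix : μ ᵥ* (1 - D2) = μ := by
    have hMD2 : (1 : Fin m → ℝ) ᵥ* (M * (1 - D2)) = μ := by
      have : M * (1 - D2) = M + A2 := by
        rw [mul_sub, mul_one, hD2, sub_neg_eq_add]
      rw [this, Matrix.vecMul_add, hA2one, add_zero, hμ]
    calc μ ᵥ* (1 - D2) = (1 : Fin m → ℝ) ᵥ* (M * (1 - D2)) := by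
          rw [hμ, vecMul_vecMul]
      _ = μ := hMD2
  -- I - D2 invertible
  have hUnit : IsUnit (1 - D2) := by
    have hMA : (M + A2).PosDef := hM.add_posSemidef hA2
    have hdet : (M * (1 - D2)).det ≠ 0 := by
      have : M * (1 - D2) = M + A2 := by
        rw [mul_sub, mul_one, hD2, sub_neg_eq_add]
      rw [this]
      exact hMA.det_pos.ne'
    have : M.det * (1 - D2).det ≠ 0 := by rwa [← det_mul]
    exact (Matrix.isUnit_iff_isUnit_det _).2 (isUnit_iff_ne_zero.2 (right_ne_zero_of_mul this))
  -- μ (I - D2)⁻¹ = μ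
  have hμinv : μ ᵥ* (1 - D2)⁻¹ = μ := by
    have := congrArg (fun v => v ᵥ* (1 - D2)⁻¹) hμfix
    simpa [vecMul_vecMul, Matrix.mul_nonsing_inv _ ((Matrix.isUnit_iff_isUnit_det _).1 hUnit)]
      using this.symm
  -- μ D1 = 0
  have hμD1 : μ ᵥ* D1 = 0 := by
    have hMD1 : M * D1 = -(D1ᵀ * M) := by
      have := hD1
      linear_combination (norm := noncomm_ring) this
    have : μ ᵥ* D1 = (1 : Fin m → ℝ) ᵥ* (M * D1) := by rw [hμ, vecMul_vecMul]
    rw [this, hMD1, Matrix.vecMul_neg, ← vecMul_vecMul, vecMul_transpose, hD1cons,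
      Matrix.zero_vecMul, neg_zero]
  -- the key: the RHS of the η-equation is mass-orthogonal
  have hkey : ∀ v : Fin m → ℝ,
      (1 : Fin m → ℝ) ⬝ᵥ (M *ᵥ -((1 - D2)⁻¹ *ᵥ (D1 *ᵥ v))) = 0 := by
    intro v
    rw [Matrix.mulVec_neg, dotProduct_neg, dotProduct_mulVec, ← hμ,
      dotProduct_mulVec, hμinv, dotProduct_mulVec, hμD1, zero_dotProduct, neg_zero]
  -- the scalar function t ↦ 𝟙ᵀ M η(t) has zero derivative
  let L0 : (Fin m → ℝ) →ₗ[ℝ] ℝ :=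
    { toFun := fun x => (1 : Fin m → ℝ) ⬝ᵥ (M *ᵥ x)
      map_add' := fun x y => by simp [Matrix.mulVec_add]
      map_smul' := fun c x => by simp [Matrix.mulVec_smul, smul_eq_mul] }
  let L : (Fin m → ℝ) →L[ℝ] ℝ := L0.toContinuousLinearMap
  have hderiv : ∀ t : ℝ, HasDerivAt (fun t => (1 : Fin m → ℝ) ⬝ᵥ (M *ᵥ η t)) 0 t := by
    intro t
    have h := L.hasFDerivAt.comp_hasDerivAt t (hη t)
    have h0 : L (-((1 - D2)⁻¹ *ᵥ (D1 *ᵥ (u t + η t * u t)))) = 0 := hkey _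
    rw [h0] at h
    exact h
  intro t₁ t₂
  have : ∀ s : ℝ, (fun t => (1 : Fin m → ℝ) ⬝ᵥ (M *ᵥ η t)) s
      = (fun t => (1 : Fin m → ℝ) ⬝ᵥ (M *ᵥ η t)) t₂ := by
    intro s
    exact is_const_of_deriv_eq_zero (𝕜 := ℝ) (fun x => (hderiv x).differentiableAt)
      (fun x => (hderiv x).deriv) s t₂
  simpa using this t₁
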